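/- Every finite chordal graph admits a perfect elimination ordering: an ordering v₁, …, vₙ of its vertices such that for each k, the neighbors of v_k among v₁, …, v_{k−1} form a clique. -/

import Mathlib

open Finset

/-- A finite simple graph is chordal if it has no induced cycle of length at least 4,
i.e. no cycle graph on `n ≥ 4` vertices embeds into it as an induced subgraph. -/
def IsChordal {V : Type} (G : SimpleGraph V) : Prop :=
  ∀ n : ℕ, 4 ≤ n → IsEmpty (SimpleGraph.cycleGraph n ↪g G)

namespace ChordalAux

variable {V : Type} (G : SimpleGraph V)

/-- Reachability where every vertex after the start must lie in `T`. -/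
def R (T : Set V) : V → V → Prop := Relation.ReflTransGen (fun u v => G.Adj u v ∧ v ∈ T)

variable {G} {T T' : Set V} {x y : V}

lemma R.refl : R G T x x := Relation.ReflTransGen.refl

lemma R.single (h : G.Adj x y) (hy : y ∈ T) : R G T x y :=
  Relation.ReflTransGen.single ⟨h, hy⟩

lemma R.tail {z : V} (h : R G T x y) (ha : G.Adj y z) (hz : z ∈ T) : R G T x z :=
  Relation.ReflTransGen.tail h ⟨ha, hz⟩

lemma R.trans {z : V} (h : R G T x y) (h' : R G T y z) : R G T x z :=
  Relation.ReflTransGen.trans h h'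

lemma R.mono (hT : T ⊆ T') (h : R G T x y) : R G T' x y := by
  induction h with
  | refl => exact R.refl
  | tail _ h2 ih => exact ih.tail h2.1 (hT h2.2)

lemma R.mem_or_eq (h : R G T x y) : y = x ∨ y ∈ T := by
  induction h with
  | refl => exact Or.inl rfl
  | tail _ h2 _ => exact Or.inr h2.2

lemma R.symm (hx : x ∈ T) (h : R G T x y) : R G T y x := by
  induction h with
  | refl => exact R.refl
  | @tail b c h1 h2 ih =>
    have h1' : R G T x b := h1
    have hb : b ∈ T := by
      rcases h1'.mem_or_eq with h | h
      · rw [h]; exact hx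
      · exact h
    exact (R.single h2.1.symm hb).trans ih

lemma R.to_fun (h : R G T x y) :
    ∃ (m : ℕ) (f : ℕ → V), f 0 = x ∧ f m = y ∧ (∀ i < m, G.Adj (f i) (f (i + 1))) ∧
      (∀ i, 0 < i → i ≤ m → f i ∈ T) := by
  induction h with
  | refl => exact ⟨0, fun _ => x, rfl, rfl, by omega, by omega⟩
  | @tail b c _ h2 ih =>
    obtain ⟨m, f, hf0, hfm, hadj, hmem⟩ := ih
    refine ⟨m + 1, fun k => if k = m + 1 then c else f k, by simp [hf0], by simp, ?_, ?_⟩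
    · intro i hi
      rcases Nat.lt_or_ge i m with h | h
      · simpa [Nat.ne_of_lt (by omega : i < m+1), Nat.ne_of_lt (by omega : i+1 < m+1), Nat.ne_of_lt (by omega : i < m)] using
          hadj i h
      · have : i = m := by omega
        subst this
        simpa [Nat.ne_of_lt (by omega : i < i+1), hfm] using h2.1
    · intro i h0 him
      by_cases hi : i = m + 1
      · simpa [hi] using h2.2
      · simpa [hi] using hmem i h0 (by omega)

variable (G) in
/-- Walk predicate: `f 0 = x`, `f m = y`, consecutive adjacency, interior in `T`. -/
def W (T : Set V) (x y : V) (m : ℕ) (f : ℕ → V) : Prop :=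
  f 0 = x ∧ f m = y ∧ (∀ i < m, G.Adj (f i) (f (i + 1))) ∧ ∀ i, 0 < i → i < m → f i ∈ T

lemma shortest_path (hex : ∃ m f, W G T x y m f) (hxy : x ≠ y) (hnadj : ¬G.Adj x y) :
    ∃ m f, W G T x y m f ∧ 2 ≤ m ∧ (∀ i j, i < j → j ≤ m → f i ≠ f j) ∧
      (∀ i j, i + 1 < j → j ≤ m → ¬G.Adj (f i) (f j)) := by
  classical
  have hex' : ∃ m, ∃ f, W G T x y m f := hex
  obtain ⟨f, hf⟩ := Nat.find_spec hex'
  set m := Nat.find hex' with hm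
  have hmin : ∀ m' < m, ∀ f', ¬ W G T x y m' f' := by
    intro m' hm' f' hw
    exact Nat.find_min hex' hm' ⟨f', hw⟩
  obtain ⟨hf0, hfm, hadj, hmem⟩ := hf
  have hm2 : 2 ≤ m := by
    rcases Nat.lt_or_ge m 2 with h | h
    · interval_cases m
      · exact absurd (hf0.symm.trans hfm) hxy
      · exact absurd (hf0 ▸ hfm ▸ hadj 0 (by omega)) hnadj
    · exact h
  refine ⟨m, f, ⟨hf0, hfm, hadj, hmem⟩, hm2, ?_, ?_⟩
  · -- no duplicates
    intro i j hij hjm hdup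
    by_cases hj : j = m
    · by_cases hi : i = 0
      · subst hi hj
        rw [hf0, hfm] at hdup
        exact hxy hdup
      · -- truncate: path of length i
        refine hmin i (by omega) f ⟨hf0, ?_, fun k hk => hadj k (by omega),
          fun k h0 hk => hmem k h0 (by omega)⟩
        rw [hdup, hj, hfm]
    · -- splice out the loop
      set d := j - i with hd
      have hd1 : 1 ≤ d := by omega
      refine hmin (m - d) (by omega) (fun k => if k ≤ i then f k else f (k + d)) ⟨?_, ?_, ?_, ?_⟩
      · simp [hf0]
      · have : ¬ (m - d ≤ i) := by omega
        simp only [this, if_false]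
        rw [show m - d + d = m by omega, hfm]
      · intro k hk
        by_cases h1 : k + 1 ≤ i
        · simpa [h1, show k ≤ i by omega] using hadj k (by omega)
        · by_cases h2 : k ≤ i
          · have : k = i := by omega
            subst this
            simp only [h2, if_true, h1, if_false]
            have : k + 1 + d = j + 1 := by omega
            rw [this, hdup]
            exact hadj j (by omega)
          · simp only [h1, if_false, h2, if_false]
            have := hadj (k + d) (by omega)
            rwa [show k + 1 + d = k + d + 1 by omega]
      · intro k h0 hk
        by_cases h2 : k ≤ i
        · simpa [h2] using hmem k h0 (by omega)
        · simp only [h2, if_false]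
          exact hmem (k + d) (by omega) (by omega)
  · -- no chords
    intro i j hij hjm hadj'
    set d := j - i - 1 with hd
    have hd1 : 1 ≤ d := by omega
    refine hmin (m - d) (by omega) (fun k => if k ≤ i then f k else f (k + d)) ⟨?_, ?_, ?_, ?_⟩
    · simp [hf0]
    · have : ¬ (m - d ≤ i) := by omega
      simp only [this, if_false]
      rw [show m - d + d = m by omega, hfm]
    · intro k hk
      by_cases h1 : k + 1 ≤ i
      · simpa [h1, show k ≤ i by omega] using hadj k (by omega)
      · by_cases h2 : k ≤ i
        · have : k = i := by omega
          subst this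
          simp only [h2, if_true, h1, if_false]
          rw [show k + 1 + d = j by omega]
          exact hadj'
        · simp only [h1, if_false, h2, if_false]
          have := hadj (k + d) (by omega)
          rwa [show k + 1 + d = k + d + 1 by omega]
    · intro k h0 hk
      by_cases h2 : k ≤ i
      · simpa [h2] using hmem k h0 (by omega)
      · simp only [h2, if_false]
        exact hmem (k + d) (by omega) (by omega)


variable {G : SimpleGraph V}

lemma no_cycle (hG : IsChordal G) {n : ℕ} (hn : 4 ≤ n) (h : ℕ → V)
    (hinj : ∀ i j, i < j → j < n → h i ≠ h j)
    (hadj : ∀ i < n, G.Adj (h i) (h ((i + 1) % n)))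
    (hchord : ∀ i j, i < j → j < n → G.Adj (h i) (h j) → j = i + 1 ∨ (i = 0 ∧ j = n - 1)) :
    False := by
  obtain ⟨m, rfl⟩ : ∃ m, n = m + 2 := ⟨n - 2, by omega⟩
  set n := m + 2 with hndef
  have key : ∀ u v : Fin n, u.val < v.val → G.Adj (h u.val) (h v.val) →
      u - v = 1 ∨ v - u = 1 := by
    intro u v huv hA
    rcases hchord u.val v.val huv v.isLt hA with hc | ⟨hu0, hv⟩
    · right
      have : v = u + 1 := by
        apply Fin.ext
        rw [Fin.val_add, Fin.val_one, hc, Nat.mod_eq_of_lt (hc ▸ v.isLt)]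
      rw [this]
      exact add_sub_cancel_left u 1
    · left
      have : u = v + 1 := by
        apply Fin.ext
        rw [Fin.val_add, Fin.val_one, hu0, hv]
        rw [show n - 1 + 1 = n by omega, Nat.mod_self]
      rw [this]
      exact add_sub_cancel_left v 1
  have e : SimpleGraph.cycleGraph n ↪g G := by
    refine ⟨⟨fun i => h i.val, ?_⟩, ?_⟩
    · intro u v huv
      by_contra hne
      rcases Ne.lt_or_gt (fun hvu : u = v => hne hvu) with hlt | hlt
      · exact hinj u.val v.val hlt v.isLt huv
      · exact hinj v.val u.val hlt u.isLt huv.symm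
    · intro u v
      show G.Adj (h u.val) (h v.val) ↔ (u - v = 1 ∨ v - u = 1)
      constructor
      · intro hA
        rcases Nat.lt_trichotomy u.val v.val with hlt | heq | hlt
        · rcases key u v hlt hA with hc | hc
          · exact Or.inl hc
          · exact Or.inr hc
        · exact absurd (Fin.ext heq : u = v) (fun hvu => G.irrefl (hvu ▸ hA))
        · rcases key v u hlt hA.symm with hc | hc
          · exact Or.inr hc
          · exact Or.inl hc
      · intro hc
        have adj1 : ∀ w : Fin n, G.Adj (h w.val) (h ((w + 1).val)) := by
          intro w
          have := hadj w.val w.isLt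
          rwa [show (w + 1).val = (w.val + 1) % n by rw [Fin.val_add, Fin.val_one]]
        rcases hc with hc | hc
        · have : u = v + 1 := by rw [sub_eq_iff_eq_add] at hc; rw [hc, add_comm]
          rw [this]
          exact (adj1 v).symm
        · have : v = u + 1 := by rw [sub_eq_iff_eq_add] at hc; rw [hc, add_comm]
          rw [this]
          exact adj1 u
  exact (hG n hn).false e


lemma glue (hG : IsChordal G) {A B : Set V} {x y : V} (_hxy : x ≠ y)
    (hABdisj : ∀ u, u ∈ A → u ∈ B → False)
    (hABadj : ∀ u ∈ A, ∀ w ∈ B, ¬G.Adj u w)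
    (hxB : x ∉ B) (hyB : y ∉ B)
    {mP : ℕ} {f : ℕ → V} (hP : W G A x y mP f) (hP2 : 2 ≤ mP)
    (hPinj : ∀ i j, i < j → j ≤ mP → f i ≠ f j)
    (hPch : ∀ i j, i + 1 < j → j ≤ mP → ¬G.Adj (f i) (f j))
    {mQ : ℕ} {g : ℕ → V} (hQ : W G B x y mQ g) (hQ2 : 2 ≤ mQ)
    (hQinj : ∀ i j, i < j → j ≤ mQ → g i ≠ g j)
    (hQch : ∀ i j, i + 1 < j → j ≤ mQ → ¬G.Adj (g i) (g j)) : False := by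
  obtain ⟨hf0, hfm, hfadj, hfmem⟩ := hP
  obtain ⟨hg0, hgm, hgadj, hgmem⟩ := hQ
  set n := mP + mQ with hn
  set h : ℕ → V := fun k => if k ≤ mP then f k else g (n - k) with hh
  have hcoh : ∀ i, mP ≤ i → h i = g (n - i) := by
    intro i hi
    rcases Nat.eq_or_lt_of_le hi with heq | hlt
    · rw [← heq]
      simp only [hh, le_refl, if_true]
      rw [hfm, show n - mP = mQ by omega, hgm]
    · simp only [hh, Nat.not_le.mpr hlt, if_false]
  have hcohf : ∀ i, i ≤ mP → h i = f i := by
    intro i hi; simp only [hh, hi, if_true]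
  -- cross non-equality and non-adjacency
  have hcross : ∀ i j, i ≤ mP → mP < j → j < n →
      h i ≠ h j ∧ (0 < i → i < mP → ¬G.Adj (h i) (h j)) := by
    intro i j hi hj1 hj2
    have hgB : h j ∈ B := by
      rw [hcoh j (by omega)]
      exact hgmem (n - j) (by omega) (by omega)
    rw [hcohf i hi]
    rcases Nat.eq_zero_or_pos i with rfl | hi0
    · rw [hf0]
      exact ⟨fun hq => hxB (hq ▸ hgB), by omega⟩
    · rcases Nat.eq_or_lt_of_le hi with heq | hilt
      · rw [heq, hfm]
        exact ⟨fun hq => hyB (hq ▸ hgB), by omega⟩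
      · have hfA : f i ∈ A := hfmem i hi0 hilt
        exact ⟨fun hq => hABdisj _ hfA (hq ▸ hgB), fun _ _ => hABadj _ hfA _ hgB⟩
  apply no_cycle hG (show 4 ≤ n by omega) h
  · -- injectivity
    intro i j hij hjn
    by_cases hj : j ≤ mP
    · rw [hcohf i (by omega), hcohf j hj]
      exact hPinj i j hij hj
    · by_cases hi : i ≤ mP
      · exact (hcross i j hi (by omega) hjn).1
      · rw [hcoh i (by omega), hcoh j (by omega)]
        exact fun hq => hQinj (n - j) (n - i) (by omega) (by omega) hq.symm
  · -- consecutive adjacency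
    intro i hi
    by_cases hlast : i + 1 = n
    · rw [hlast, Nat.mod_self, hcohf 0 (by omega), hf0, hcoh i (by omega)]
      have := hgadj (n - i - 1) (by omega)
      rw [show n - i - 1 + 1 = n - i by omega, show n - i = 1 by omega] at this
      rw [show n - i = 1 by omega]
      exact (hg0 ▸ this.symm : G.Adj (g 1) x).symm.symm
    · rw [Nat.mod_eq_of_lt (by omega : i + 1 < n)]
      by_cases h1 : i + 1 ≤ mP
      · rw [hcohf i (by omega), hcohf (i + 1) h1]
        exact hfadj i (by omega)
      · rw [hcoh (i + 1) (by omega)]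
        by_cases h2 : i ≤ mP
        · have : i = mP := by omega
          subst this
          rw [hcohf i le_rfl, hfm, ← hgm]
          have := hgadj (n - (i + 1)) (by omega)
          rw [show n - (i + 1) + 1 = mQ by omega] at this
          exact this.symm
        · rw [hcoh i (by omega)]
          have := hgadj (n - (i + 1)) (by omega)
          rw [show n - (i + 1) + 1 = n - i by omega] at this
          exact this.symm
  · -- chords
    intro i j hij hjn hadj
    by_cases hj : j ≤ mP
    · left
      by_contra hne
      exact hPch i j (by omega) hj (by rw [hcohf i (by omega), hcohf j hj] at hadj; exact hadj)
    · by_cases hi : mP ≤ i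
      · left
        by_contra hne
        rw [hcoh i hi, hcoh j (by omega)] at hadj
        exact hQch (n - j) (n - i) (by omega) (by omega) hadj.symm
      · -- i < mP < j
        rcases Nat.eq_zero_or_pos i with rfl | hi0
        · right
          refine ⟨rfl, ?_⟩
          by_contra hne
          rw [hcohf 0 (by omega), hf0, ← hg0, hcoh j (by omega)] at hadj
          exact hQch 0 (n - j) (by omega) (by omega) hadj
        · exact absurd hadj ((hcross i j (by omega) (by omega) hjn).2 hi0 (by omega))

lemma build_W {A : Set V} {x y w1 w2 : V} (h1 : G.Adj x w1) (h2 : G.Adj y w2)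
    (hw1 : w1 ∈ A) (hr : R G A w1 w2) : ∃ m f, W G A x y m f := by
  obtain ⟨m₀, f₀, h00, h0m, h0adj, h0mem⟩ := hr.to_fun
  refine ⟨m₀ + 2, fun k => if k = 0 then x else if k ≤ m₀ + 1 then f₀ (k - 1) else y,
    by simp, ?_, ?_, ?_⟩
  · simp only [show ¬(m₀ + 2 = 0) by omega, if_false, show ¬(m₀ + 2 ≤ m₀ + 1) by omega]
  · intro i hi
    rcases Nat.eq_zero_or_pos i with rfl | hi0
    · simpa [h00] using h1
    · by_cases hil : i = m₀ + 1
      · subst hil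
        simp only [show ¬(m₀ + 1 = 0) by omega, if_false, le_refl, if_true,
          show ¬(m₀ + 1 + 1 = 0) by omega, show ¬(m₀ + 1 + 1 ≤ m₀ + 1) by omega,
          Nat.add_sub_cancel]
        exact (h0m ▸ h2 : G.Adj y (f₀ m₀)).symm
      · have hile : i + 1 ≤ m₀ + 1 := by omega
        simp only [show ¬(i = 0) by omega, if_false, show i ≤ m₀ + 1 by omega, if_true,
          show ¬(i + 1 = 0) by omega, hile, if_true]
        have := h0adj (i - 1) (by omega)
        rwa [show i - 1 + 1 = i + 1 - 1 by omega] at this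
  · intro i hi0 him
    simp only [show ¬(i = 0) by omega, if_false, show i ≤ m₀ + 1 by omega, if_true]
    rcases Nat.eq_zero_or_pos (i - 1) with hz | hpos
    · rw [hz, h00]; exact hw1
    · exact h0mem (i - 1) hpos (by omega)

lemma key [Fintype V] (hG : IsChordal G) {a b : V} (hab : a ≠ b) (hnadj : ¬G.Adj a b) :
    ∃ (S A B : Set V),
      a ∈ A ∧ b ∈ B ∧
      (∀ u, u ∈ A → u ∉ S) ∧ (∀ u, u ∈ B → u ∉ S) ∧
      (∀ u, u ∈ A → u ∈ B → False) ∧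
      (∀ u, u ∈ A → ∀ w, w ∈ B → ¬G.Adj u w) ∧
      (∀ u, u ∈ A → ∀ w, G.Adj u w → w ∉ S → w ∈ A) ∧
      (∀ u, u ∈ B → ∀ w, G.Adj u w → w ∉ S → w ∈ B) ∧
      (∀ x, x ∈ S → ∀ y, y ∈ S → x ≠ y → G.Adj x y) := by
  classical
  -- a separator exists
  have hsep0 : ∃ n : ℕ, ∃ S : Finset V, S.card = n ∧ a ∉ S ∧ b ∉ S ∧ ¬R G (↑S)ᶜ a b := by
    refine ⟨_, Finset.univ \ {a, b}, rfl, by simp, by simp, ?_⟩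
    intro hR
    have hmem : ∀ u, u ∈ (↑(Finset.univ \ ({a, b} : Finset V)) : Set V)ᶜ ↔ u = a ∨ u = b := by
      intro u
      simp only [Set.mem_compl_iff, Finset.coe_sdiff, Finset.coe_univ, Finset.coe_insert,
        Finset.coe_singleton, Set.mem_diff, Set.mem_univ, true_and, Set.mem_insert_iff,
        Set.mem_singleton_iff, not_not]
    have main : ∀ u, R G (↑(Finset.univ \ ({a, b} : Finset V)) : Set V)ᶜ a u → u = a := by
      intro u hu
      induction hu with
      | refl => rfl
      | @tail p q h1 h2 ih =>
        rcases (hmem q).mp h2.2 with h | h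
        · exact h
        · rw [ih] at h2
          exact absurd (h ▸ h2.1) hnadj
    exact hab (main b hR).symm
  obtain ⟨S, hScard, haS, hbS, hsepS⟩ := Nat.find_spec hsep0
  have hSmin : ∀ x ∈ S, R G (↑(S.erase x))ᶜ a b := by
    intro x hx
    by_contra hR
    exact Nat.find_min hsep0 (hScard ▸ Finset.card_erase_lt_of_mem hx)
      ⟨S.erase x, rfl, fun h => haS (Finset.mem_of_mem_erase h),
        fun h => hbS (Finset.mem_of_mem_erase h), hR⟩
  set A : Set V := {u | u ∉ ↑S ∧ R G (↑S : Set V)ᶜ a u} with hA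
  set B : Set V := {u | u ∉ ↑S ∧ R G (↑S : Set V)ᶜ b u} with hB
  have haA : a ∈ A := ⟨haS, R.refl⟩
  have hbB : b ∈ B := ⟨hbS, R.refl⟩
  have hclA : ∀ u, u ∈ A → ∀ w, G.Adj u w → w ∉ (↑S : Set V) → w ∈ A :=
    fun u hu w hadj hw => ⟨hw, hu.2.tail hadj hw⟩
  have hclB : ∀ u, u ∈ B → ∀ w, G.Adj u w → w ∉ (↑S : Set V) → w ∈ B :=
    fun u hu w hadj hw => ⟨hw, hu.2.tail hadj hw⟩
  have hdisj : ∀ u, u ∈ A → u ∈ B → False := by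
    intro u huA huB
    exact hsepS (huA.2.trans (huB.2.symm (by simpa using hbS)))
  have hnoedge : ∀ u, u ∈ A → ∀ w, w ∈ B → ¬G.Adj u w := by
    intro u huA w hwB hadj
    exact hdisj w (hclA u huA w hadj hwB.1) hwB
  have hsepS' : ¬R G (↑S : Set V)ᶜ b a := fun h => hsepS (h.symm (by simpa using hbS))
  -- neighbors of separator vertices in each component
  have nbr : ∀ z ∈ S, ∀ (c d : V), c ∉ (↑S : Set V) → ¬R G (↑S : Set V)ᶜ c d →
      R G (↑(S.erase z) : Set V)ᶜ c d →
      ∃ w, (w ∉ (↑S : Set V) ∧ R G (↑S : Set V)ᶜ c w) ∧ G.Adj w z := by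
    intro z hz c d hc hsep hwalk
    have main : ∀ u, R G (↑(S.erase z) : Set V)ᶜ c u →
        (u ∉ (↑S : Set V) ∧ R G (↑S : Set V)ᶜ c u) ∨
        ∃ w, (w ∉ (↑S : Set V) ∧ R G (↑S : Set V)ᶜ c w) ∧ G.Adj w z := by
      intro u hu
      induction hu with
      | refl => exact Or.inl ⟨hc, R.refl⟩
      | @tail p q h1 h2 ih =>
        rcases ih with hp | hp
        · by_cases hq : q ∈ (↑S : Set V)
          · have hqz : q = z := by
              have := h2.2
              simp only [Set.mem_compl_iff, Finset.coe_erase, Set.mem_diff] at this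
              by_contra hne
              exact this ⟨hq, by simp [hne]⟩
            exact Or.inr ⟨p, hp, hqz ▸ h2.1⟩
          · exact Or.inl ⟨hq, hp.2.tail h2.1 hq⟩
        · exact Or.inr hp
    rcases main d hwalk with h | h
    · exact absurd h.2 hsep
    · exact h
  -- connectivity inside a component
  have upgrade : ∀ (c : V), c ∉ (↑S : Set V) → ∀ u, R G (↑S : Set V)ᶜ c u →
      R G {u | u ∉ (↑S : Set V) ∧ R G (↑S : Set V)ᶜ c u} c u := by
    intro c hc u hu
    induction hu with
    | refl => exact R.refl
    | @tail p q h1 h2 ih =>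
      exact ih.tail h2.1 ⟨h2.2, R.tail h1 h2.1 h2.2⟩
  refine ⟨↑S, A, B, haA, hbB, fun u hu => hu.1, fun u hu => hu.1, hdisj, hnoedge,
    hclA, hclB, ?_⟩
  -- the separator is a clique
  intro x hx y hy hxy
  rw [Finset.mem_coe] at hx hy
  by_contra hnxy
  obtain ⟨w1, hw1A, hw1x⟩ := nbr x hx a b haS hsepS (hSmin x hx)
  obtain ⟨w2, hw2A, hw2y⟩ := nbr y hy a b haS hsepS (hSmin y hy)
  have haerase : ∀ z : V, a ∈ (↑(S.erase z) : Set V)ᶜ := by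
    intro z
    simp only [Set.mem_compl_iff, Finset.coe_erase, Set.mem_diff, Finset.mem_coe]
    exact fun h => haS h.1
  obtain ⟨w3, hw3B, hw3x⟩ := nbr x hx b a hbS hsepS' ((hSmin x hx).symm (haerase x))
  obtain ⟨w4, hw4B, hw4y⟩ := nbr y hy b a hbS hsepS' ((hSmin y hy).symm (haerase y))
  have haS' : a ∉ (↑S : Set V) := by simpa using haS
  have hbS' : b ∉ (↑S : Set V) := by simpa using hbS
  have hrA : R G A w1 w2 :=
    ((upgrade a haS' w1 hw1A.2).symm haA).trans (upgrade a haS' w2 hw2A.2)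
  have hrB : R G B w3 w4 :=
    ((upgrade b hbS' w3 hw3B.2).symm hbB).trans (upgrade b hbS' w4 hw4B.2)
  obtain ⟨mP, f, hWP⟩ := build_W hw1x.symm hw2y.symm (show w1 ∈ A from hw1A) hrA
  obtain ⟨mQ, g, hWQ⟩ := build_W hw3x.symm hw4y.symm (show w3 ∈ B from hw3B) hrB
  obtain ⟨mP', f', hP, hP2, hPinj, hPch⟩ := shortest_path ⟨mP, f, hWP⟩ hxy hnxy
  obtain ⟨mQ', g', hQ, hQ2, hQinj, hQch⟩ := shortest_path ⟨mQ, g, hWQ⟩ hxy hnxy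
  exact glue hG hxy hdisj hnoedge (fun h => h.1 hx) (fun h => h.1 hy)
    hP hP2 hPinj hPch hQ hQ2 hQinj hQch

def Simplicial (G : SimpleGraph V) (v : V) : Prop :=
  ∀ x y, G.Adj v x → G.Adj v y → x ≠ y → G.Adj x y

lemma chordal_induce (hG : IsChordal G) (s : Set V) : IsChordal (G.induce s) :=
  fun n hn => ⟨fun e => (hG n hn).false ((SimpleGraph.Embedding.induce s).comp e)⟩

lemma dirac : ∀ (n : ℕ) (V : Type) [Fintype V] (G : SimpleGraph V), Fintype.card V ≤ n →
    IsChordal G →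
    (∀ u v : V, u ≠ v → G.Adj u v) ∨
      ∃ u v : V, u ≠ v ∧ ¬G.Adj u v ∧ Simplicial G u ∧ Simplicial G v := by
  intro n
  induction n with
  | zero =>
    intro V _ G hcard _
    left
    intro u
    exact absurd (Fintype.card_pos_iff.mpr ⟨u⟩) (by omega)
  | succ n ih =>
    intro V _ G hcard hG
    by_cases hcomp : ∀ u v : V, u ≠ v → G.Adj u v
    · exact Or.inl hcomp
    right
    push_neg at hcomp
    obtain ⟨a, b, hab, hnadj⟩ := hcomp
    obtain ⟨S, A, B, haA, hbB, hAS, hBS, hdisj, hnoedge, hclA, hclB, hclique⟩ :=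
      key hG hab hnadj
    have getsimp : ∀ (c z : V) (C : Set V), c ∈ C → (∀ u, u ∈ C → u ∉ S) →
        (∀ u, u ∈ C → ∀ w, G.Adj u w → w ∉ S → w ∈ C) →
        z ∉ C → z ∉ S →
        ∃ u, u ∈ C ∧ Simplicial G u := by
      intro c z C hc hCS hcl hzC hzS
      classical
      set s : Set V := C ∪ S with hs
      haveI : Fintype ↥s := Fintype.ofFinite _
      have hclose : ∀ u, u ∈ C → ∀ w, G.Adj u w → w ∈ s := by
        intro u hu w hadj
        by_cases hw : w ∈ S
        · exact Or.inr hw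
        · exact Or.inl (hcl u hu w hadj hw)
      have hzs : z ∉ s := fun h => h.elim hzC hzS
      have hle : Fintype.card ↥s ≤ n := by
        have : Fintype.card ↥s < Fintype.card V := by
          apply Fintype.card_lt_of_injective_of_notMem Subtype.val Subtype.val_injective
            (b := z)
          rintro ⟨x, hxeq⟩
          exact hzs (hxeq ▸ x.2)
        omega
      rcases ih ↥s (G.induce s) hle (chordal_induce hG s) with hco | ⟨u, w, huw, hnuw, hsu, hsw⟩
      · refine ⟨c, hc, ?_⟩
        intro x y hax hay hxy
        have hx : x ∈ s := hclose c hc x hax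
        have hy : y ∈ s := hclose c hc y hay
        exact hco ⟨x, hx⟩ ⟨y, hy⟩ (fun h => hxy (congrArg Subtype.val h))
      · -- at least one of u, w has value in C
        have hvalne : (u : V) ≠ (w : V) := fun h => huw (Subtype.ext h)
        have hone : (u : V) ∈ C ∨ (w : V) ∈ C := by
          by_contra hno
          push_neg at hno
          have hu : (u : V) ∈ S := u.2.elim (fun h => absurd h hno.1) id
          have hw : (w : V) ∈ S := w.2.elim (fun h => absurd h hno.2) id
          exact hnuw (hclique _ hu _ hw hvalne)
        have transfer : ∀ p : ↥s, (p : V) ∈ C → Simplicial (G.induce s) p →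
            ∃ u, u ∈ C ∧ Simplicial G u := by
          intro p hpC hps
          refine ⟨p, hpC, ?_⟩
          intro x y hax hay hxy
          have hx : x ∈ s := hclose p hpC x hax
          have hy : y ∈ s := hclose p hpC y hay
          exact hps ⟨x, hx⟩ ⟨y, hy⟩ hax hay (fun h => hxy (congrArg Subtype.val h))
        rcases hone with h | h
        · exact transfer u h hsu
        · exact transfer w h hsw
    obtain ⟨u, huA, hu⟩ := getsimp a b A haA hAS hclA (fun h => hdisj b h hbB) (hBS b hbB)
    obtain ⟨w, hwB, hw⟩ := getsimp b a B hbB hBS hclB (fun h => hdisj a haA h) (hAS a haA)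
    exact ⟨u, w, fun h => hdisj u huA (by rw [h]; exact hwB), hnoedge u huA w hwB, hu, hw⟩

lemma exists_simplicial [Fintype V] [Nonempty V] (hG : IsChordal G) :
    ∃ v, Simplicial G v := by
  rcases dirac (Fintype.card V) V G le_rfl hG with hco | ⟨u, _, _, _, hu, _⟩
  · obtain ⟨v⟩ := ‹Nonempty V›
    exact ⟨v, fun x y hx hy hxy => hco x y hxy⟩
  · exact ⟨u, hu⟩

lemma peo : ∀ (n : ℕ) (V : Type) [Fintype V] [DecidableEq V] (G : SimpleGraph V),
    Fintype.card V = n → IsChordal G →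
    ∃ σ : Fin (Fintype.card V) ≃ V,
      ∀ k i j : Fin (Fintype.card V), i < k → j < k → i ≠ j →
        G.Adj (σ i) (σ k) → G.Adj (σ j) (σ k) → G.Adj (σ i) (σ j) := by
  intro n
  induction n with
  | zero =>
    intro V _ _ G hc _
    exact ⟨(Fintype.equivFin V).symm, fun k => absurd k.isLt (by omega)⟩
  | succ n ih =>
    intro V _ _ G hc hG
    haveI : Nonempty V := Fintype.card_pos_iff.mp (by omega)
    obtain ⟨v, hv⟩ := exists_simplicial hG
    have hn : Fintype.card {u : V // u ≠ v} = n := by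
      have := Fintype.card_subtype_compl (fun u : V => u = v)
      simp only [Fintype.card_subtype_eq] at this
      have h2 : Fintype.card {u : V // u ≠ v} = Fintype.card {u : V // ¬u = v} := rfl
      omega
    obtain ⟨σ', hσ'⟩ := ih {u : V // u ≠ v} (G.induce {u : V | u ≠ v}) hn
      (chordal_induce hG _)
    set σ'' : Fin n ≃ {u : V // u ≠ v} := (finCongr hn.symm).trans σ' with hσ''
    set τ : Fin (n + 1) ≃ V :=
      finSuccEquivLast.trans (σ''.optionCongr.trans (Equiv.optionSubtypeNe v)) with hτ
    set σ : Fin (Fintype.card V) ≃ V := (finCongr hc).trans τ with hσdef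
    have comp1 : ∀ i₀ : Fin n, τ (Fin.castSucc i₀) = (σ'' i₀ : V) := by
      intro i₀
      simp [hτ, finSuccEquivLast_castSucc]
    have comp2 : τ (Fin.last n) = v := by
      simp [hτ, finSuccEquivLast_last]
    refine ⟨σ, ?_⟩
    intro k i j hik hjk hij hAik hAjk
    have lt' : ∀ x : Fin (Fintype.card V), x.val < n + 1 := by
      intro x; rw [← hc]; exact x.isLt
    have hσval : ∀ x : Fin (Fintype.card V), σ x = τ ⟨x.val, lt' x⟩ := by
      intro x; rfl
    by_cases hk : k.val = n
    · -- σ k = v, use simpliciality of v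
      have hkv : σ k = v := by
        rw [hσval k]
        have : (⟨k.val, lt' k⟩ : Fin (n + 1)) = Fin.last n := Fin.ext hk
        rw [this, comp2]
      have hne : σ i ≠ σ j := fun h => hij (σ.injective h)
      rw [hkv] at hAik hAjk
      exact hv (σ i) (σ j) hAik.symm hAjk.symm hne
    · -- k is not the last index; everything lives in the subtype
      have hkn : k.val < n := by have := lt' k; omega
      have hin : i.val < n := by have : i.val < k.val := hik; omega
      have hjn : j.val < n := by have : j.val < k.val := hjk; omega
      set i₀ : Fin n := ⟨i.val, hin⟩
      set j₀ : Fin n := ⟨j.val, hjn⟩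
      set k₀ : Fin n := ⟨k.val, hkn⟩
      have hi' : σ i = (σ'' i₀ : V) := by
        rw [hσval i, show (⟨i.val, lt' i⟩ : Fin (n + 1)) = Fin.castSucc i₀ from rfl,
          comp1]
      have hj' : σ j = (σ'' j₀ : V) := by
        rw [hσval j, show (⟨j.val, lt' j⟩ : Fin (n + 1)) = Fin.castSucc j₀ from rfl,
          comp1]
      have hk' : σ k = (σ'' k₀ : V) := by
        rw [hσval k, show (⟨k.val, lt' k⟩ : Fin (n + 1)) = Fin.castSucc k₀ from rfl,
          comp1]
      rw [hi', hj']
      rw [hi', hk'] at hAik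
      rw [hj', hk'] at hAjk
      have := hσ' (finCongr hn.symm k₀) (finCongr hn.symm i₀) (finCongr hn.symm j₀)
        (show (i₀ : ℕ) < (k₀ : ℕ) from hik) (show (j₀ : ℕ) < (k₀ : ℕ) from hjk)
        (fun h => hij (Fin.ext (by simpa using congrArg Fin.val h)))
        hAik hAjk
      exact this

end ChordalAux

/-- Every finite chordal graph admits a perfect elimination ordering: an ordering
`v₁, …, vₙ` of the vertices such that for each `k` the earlier neighbors of `v_k` form a
clique. -/
theorem stmt_17 {V : Type} [Fintype V] [DecidableEq V]
    (G : SimpleGraph V) (hG : IsChordal G) :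
    ∃ σ : Fin (Fintype.card V) ≃ V,
      ∀ k i j : Fin (Fintype.card V), i < k → j < k → i ≠ j →
        G.Adj (σ i) (σ k) → G.Adj (σ j) (σ k) → G.Adj (σ i) (σ j) := by
  exact ChordalAux.peo (Fintype.card V) V G rfl hG
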